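/- arXiv:2103.13973 — 3 statements merged into one kernel-verified Lean document; each statement's English description precedes it below -/
import Mathlib

section
/- Let Φ be a map on D×D complex matrices given in Kraus form Φ(X) = ∑_k E_k X E_kᴴ for a finite family of D×D complex matrices (E_k) satisfying the completeness relation ∑_k E_kᴴ E_k = I. Then for any two density matrices ρ and σ, ‖Φ(ρ) − Φ(σ)‖₁ ≤ ‖ρ − σ‖₁; i.e., a completely positive trace-preserving map is a contraction with respect to the trace distance. -/
open Matrix ComplexOrder

/-- The trace norm `‖A‖₁ = tr √(AᴴA)` of a complex square matrix. -/
noncomputable def traceNorm {n : Type*} [Fintype n] [DecidableEq n]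
    (A : Matrix n n ℂ) : ℝ :=
  (((Matrix.posSemidef_conjTranspose_mul_self A).1.eigenvectorUnitary.1 *
      diagonal (((↑) : ℝ → ℂ) ∘ (√·) ∘ (Matrix.posSemidef_conjTranspose_mul_self A).1.eigenvalues) *
      (star (Matrix.posSemidef_conjTranspose_mul_self A).1.eigenvectorUnitary : Matrix n n ℂ)).trace).re

/-- A density matrix: positive semidefinite with trace 1. -/
def IsDensity {n : Type*} [Fintype n] (ρ : Matrix n n ℂ) : Prop :=
  ρ.PosSemidef ∧ ρ.trace = 1

section Helpers

set_option linter.unusedSectionVars false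
set_option linter.unreachableTactic false
set_option linter.unusedTactic false

variable {n : Type*} [Fintype n] [DecidableEq n]


variable {n : Type*} [Fintype n] [DecidableEq n]

lemma psd_trace_nonneg {A : Matrix n n ℂ} (hA : A.PosSemidef) : 0 ≤ A.trace := by
  rw [Matrix.trace]
  apply Finset.sum_nonneg
  intro i _
  exact hA.diag_nonneg

open scoped MatrixOrder in
lemma trace_mul_psd_nonneg {A B : Matrix n n ℂ} (hA : A.PosSemidef) (hB : B.PosSemidef) :
    0 ≤ (A * B).trace := by
  obtain ⟨C, rfl⟩ := CStarAlgebra.nonneg_iff_eq_star_mul_self.mp hA.nonneg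
  rw [mul_assoc, Matrix.trace_mul_comm]
  exact psd_trace_nonneg (hB.mul_mul_conjTranspose_same C)

noncomputable def cdiag {A : Matrix n n ℂ} (hA : A.IsHermitian) (f : n → ℝ) : Matrix n n ℂ :=
  (hA.eigenvectorUnitary : Matrix n n ℂ) * diagonal (fun i => (f i : ℂ)) *
    star (hA.eigenvectorUnitary : Matrix n n ℂ)

lemma conj_mul_conj (U X Y : Matrix n n ℂ) (hU : star U * U = 1) :
    (U * X * star U) * (U * Y * star U) = U * (X * Y) * star U := by
  simp only [mul_assoc]
  rw [← mul_assoc (star U) U, hU, one_mul]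

lemma cdiag_mul {A : Matrix n n ℂ} (hA : A.IsHermitian) (f g : n → ℝ) :
    cdiag hA f * cdiag hA g = cdiag hA (fun i => f i * g i) := by
  unfold cdiag
  rw [conj_mul_conj _ _ _ (Matrix.UnitaryGroup.star_mul_self _), diagonal_mul_diagonal]
  norm_cast

lemma trace_cdiag {A : Matrix n n ℂ} (hA : A.IsHermitian) (f : n → ℝ) :
    (cdiag hA f).trace = ((∑ i, f i : ℝ) : ℂ) := by
  unfold cdiag
  rw [Matrix.trace_mul_cycle, Matrix.UnitaryGroup.star_mul_self, one_mul,
    Matrix.trace_diagonal]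
  push_cast
  rfl

lemma cdiag_psd {A : Matrix n n ℂ} (hA : A.IsHermitian) {f : n → ℝ} (hf : ∀ i, 0 ≤ f i) :
    (cdiag hA f).PosSemidef := by
  have hd : (diagonal (fun i => ((f i : ℝ) : ℂ))).PosSemidef :=
    Matrix.PosSemidef.diagonal fun i => by
      simpa using Complex.zero_le_real.mpr (hf i)
  unfold cdiag
  rw [Matrix.star_eq_conjTranspose]
  exact hd.mul_mul_conjTranspose_same _

lemma cdiag_sub {A : Matrix n n ℂ} (hA : A.IsHermitian) (f g : n → ℝ) :
    cdiag hA f - cdiag hA g = cdiag hA (fun i => f i - g i) := by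
  unfold cdiag
  rw [← Matrix.sub_mul, ← Matrix.mul_sub, diagonal_sub]
  norm_cast

lemma cdiag_one {A : Matrix n n ℂ} (hA : A.IsHermitian) :
    cdiag hA (fun _ => 1) = 1 := by
  unfold cdiag
  have h : (diagonal (fun _ : n => ((1:ℝ) : ℂ))) = 1 := by simp
  rw [h, mul_one]
  exact mem_unitaryGroup_iff.mp (hA.eigenvectorUnitary).2

lemma cdiag_spectral {A : Matrix n n ℂ} (hA : A.IsHermitian) :
    A = cdiag hA hA.eigenvalues := by
  convert hA.spectral_theorem using 2
  rw [Unitary.conjStarAlgAut_apply]; rfl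

lemma traceNorm_hermitian {A : Matrix n n ℂ} (hA : A.IsHermitian) :
    traceNorm A = ∑ i, |hA.eigenvalues i| := by
  have hB : (cdiag hA (fun i => |hA.eigenvalues i|)).PosSemidef :=
    cdiag_psd hA fun i => abs_nonneg _
  have hsq : (cdiag hA (fun i => |hA.eigenvalues i|)) ^ 2 = Aᴴ * A := by
    rw [hA.eq, pow_two, cdiag_mul]
    conv_rhs => rw [cdiag_spectral hA]
    rw [cdiag_mul]
    have he : (fun i => |hA.eigenvalues i| * |hA.eigenvalues i|)
        = fun i => hA.eigenvalues i * hA.eigenvalues i :=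
      funext fun i => abs_mul_abs_self _
    rw [he]
  have hAA : (Aᴴ * A).IsHermitian := (Matrix.posSemidef_conjTranspose_mul_self A).1
  have h1 : Aᴴ * A = cfc (fun x : ℝ => x ^ 2) A := by
    rw [cfc_pow_id A 2 hA.isSelfAdjoint, hA.eq, pow_two]
  have h2 : traceNorm A = (cfc Real.sqrt (Aᴴ * A)).trace.re := by
    rw [hAA.cfc_eq, IsHermitian.cfc, Unitary.conjStarAlgAut_apply]; rfl
  rw [h2, h1, ← cfc_comp Real.sqrt (fun x : ℝ => x ^ 2) A hA.isSelfAdjoint]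
  have h3 : (Real.sqrt ∘ fun x : ℝ => x ^ 2) = abs := funext fun x => Real.sqrt_sq_eq_abs x
  rw [h3, hA.cfc_eq, show hA.cfc abs = cdiag hA (fun i => |hA.eigenvalues i|) from by
    rw [IsHermitian.cfc, Unitary.conjStarAlgAut_apply]; rfl, trace_cdiag]
  simp

lemma cdiag_add {A : Matrix n n ℂ} (hA : A.IsHermitian) (f g : n → ℝ) :
    cdiag hA f + cdiag hA g = cdiag hA (fun i => f i + g i) := by
  unfold cdiag
  rw [← Matrix.add_mul, ← Matrix.mul_add, diagonal_add]
  norm_cast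

lemma psd_sum {ι : Type*} [Fintype ι] (f : ι → Matrix n n ℂ)
    (h : ∀ k, (f k).PosSemidef) : (∑ k, f k).PosSemidef :=
  Finset.sum_induction f _ (fun _ _ ha hb => ha.add hb) Matrix.PosSemidef.zero
    (fun k _ => h k)

lemma trace_kraus {ι : Type*} [Fintype ι] (E : ι → Matrix n n ℂ)
    (hE : ∑ k, (E k)ᴴ * E k = 1) (X : Matrix n n ℂ) :
    (∑ k, E k * X * (E k)ᴴ).trace = X.trace := by
  rw [Matrix.trace_sum]
  calc ∑ k, (E k * X * (E k)ᴴ).trace = ∑ k, ((E k)ᴴ * E k * X).trace := by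
        refine Finset.sum_congr rfl fun k _ => ?_
        rw [Matrix.trace_mul_cycle]
    _ = ((∑ k, (E k)ᴴ * E k) * X).trace := by rw [Finset.sum_mul, Matrix.trace_sum]
    _ = X.trace := by rw [hE, one_mul]

lemma re_le_of_sub_nonneg {z w : ℂ} (h : 0 ≤ w - z) : z.re ≤ w.re := by
  have := (Complex.le_def.mp h).1
  simp only [Complex.zero_re, Complex.sub_re] at this
  linarith

lemma kraus_contraction {ι : Type*} [Fintype ι] (E : ι → Matrix n n ℂ)
    (hE : ∑ k, (E k)ᴴ * E k = 1) {Δ : Matrix n n ℂ} (hΔ : Δ.IsHermitian) :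
    traceNorm (∑ k, E k * Δ * (E k)ᴴ) ≤ traceNorm Δ := by
  classical
  set lam := hΔ.eigenvalues with hlam
  set P := cdiag hΔ (fun i => max (lam i) 0) with hPdef
  set Q := cdiag hΔ (fun i => max (-lam i) 0) with hQdef
  have hP : P.PosSemidef := cdiag_psd hΔ fun i => le_max_right _ _
  have hQ : Q.PosSemidef := cdiag_psd hΔ fun i => le_max_right _ _
  have hΔPQ : Δ = P - Q := by
    rw [hPdef, hQdef, cdiag_sub]
    have hfe : (fun i => max (lam i) 0 - max (-lam i) 0) = lam :=
      funext fun i => max_zero_sub_max_neg_zero_eq_self _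
    rw [hfe]
    exact cdiag_spectral hΔ
  set ΦP := ∑ k, E k * P * (E k)ᴴ with hΦPdef
  set ΦQ := ∑ k, E k * Q * (E k)ᴴ with hΦQdef
  have hΦP : ΦP.PosSemidef := psd_sum _ fun k => hP.mul_mul_conjTranspose_same (E k)
  have hΦQ : ΦQ.PosSemidef := psd_sum _ fun k => hQ.mul_mul_conjTranspose_same (E k)
  set M := ∑ k, E k * Δ * (E k)ᴴ with hMdef
  have hMsplit : M = ΦP - ΦQ := by
    rw [hMdef, hΦPdef, hΦQdef, ← Finset.sum_sub_distrib]
    refine Finset.sum_congr rfl fun k _ => ?_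
    rw [hΔPQ, Matrix.mul_sub, Matrix.sub_mul]
  have hM : M.IsHermitian := by rw [hMsplit]; exact hΦP.1.sub hΦQ.1
  set μ := hM.eigenvalues with hμ
  set s : n → ℝ := fun i => if 0 ≤ μ i then 1 else -1 with hs
  set S := cdiag hM s with hS
  have hprod : S * M = cdiag hM (fun i => s i * μ i) := by
    rw [hS, ← cdiag_mul hM s μ]
    congr 1
    exact cdiag_spectral hM
  have hSM : (S * M).trace = ((∑ i, |μ i| : ℝ) : ℂ) := by
    rw [hprod, trace_cdiag]
    congr 1
    refine Finset.sum_congr rfl fun i _ => ?_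
    rw [hs]
    by_cases h : 0 ≤ μ i
    · simp [h, abs_of_nonneg h]
    · simp [h, abs_of_neg (lt_of_not_ge h)]
  have h1mS : (1 - S).PosSemidef := by
    rw [← cdiag_one hM, hS, cdiag_sub]
    refine cdiag_psd hM fun i => ?_
    rw [hs]; by_cases h : 0 ≤ μ i <;> simp [h] <;> norm_num
  have h1pS : (1 + S).PosSemidef := by
    rw [← cdiag_one hM, hS, cdiag_add]
    refine cdiag_psd hM fun i => ?_
    rw [hs]; by_cases h : 0 ≤ μ i <;> simp [h] <;> norm_num
  have hMnorm : traceNorm M = ((S * M).trace).re := by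
    rw [traceNorm_hermitian hM, hSM]
    simp
    rfl
  have hineq1 : ((S * ΦP).trace).re ≤ (ΦP.trace).re := by
    apply re_le_of_sub_nonneg
    have := trace_mul_psd_nonneg h1mS hΦP
    rwa [Matrix.sub_mul, one_mul, Matrix.trace_sub] at this

  have hineq2 : (-(S * ΦQ).trace).re ≤ (ΦQ.trace).re := by
    apply re_le_of_sub_nonneg
    have := trace_mul_psd_nonneg h1pS hΦQ
    rw [Matrix.add_mul, one_mul, Matrix.trace_add] at this
    convert this using 1
    ring
  have htrP : ΦP.trace = ((∑ i, max (lam i) 0 : ℝ) : ℂ) := by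
    rw [hΦPdef, trace_kraus E hE, hPdef, trace_cdiag]
  have htrQ : ΦQ.trace = ((∑ i, max (-lam i) 0 : ℝ) : ℂ) := by
    rw [hΦQdef, trace_kraus E hE, hQdef, trace_cdiag]
  have hsplittr : ((S * M).trace).re = ((S * ΦP).trace).re + (-(S * ΦQ).trace).re := by
    rw [hMsplit, Matrix.mul_sub, Matrix.trace_sub]
    simp [Complex.sub_re, Complex.neg_re, sub_eq_add_neg]
  rw [hMnorm, hsplittr, traceNorm_hermitian hΔ]
  calc ((S * ΦP).trace).re + (-(S * ΦQ).trace).re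
      ≤ (ΦP.trace).re + (ΦQ.trace).re := add_le_add hineq1 hineq2
    _ = ∑ i, |lam i| := by
        rw [htrP, htrQ]
        simp only [Complex.ofReal_re]
        rw [← Finset.sum_add_distrib]
        exact Finset.sum_congr rfl fun i _ => max_zero_add_max_neg_zero_eq_abs_self _

end Helpers

/-- A CPTP map in Kraus form is a contraction for the trace distance. -/
theorem cptp_trace_distance_contraction {D : ℕ} {ι : Type*} [Fintype ι]
    (E : ι → Matrix (Fin D) (Fin D) ℂ)
    (hE : ∑ k, (E k)ᴴ * E k = 1)
    (Φ : Matrix (Fin D) (Fin D) ℂ → Matrix (Fin D) (Fin D) ℂ)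
    (hΦ : ∀ X, Φ X = ∑ k, E k * X * (E k)ᴴ)
    (ρ σ : Matrix (Fin D) (Fin D) ℂ)
    (hρ : IsDensity ρ) (hσ : IsDensity σ) :
    traceNorm (Φ ρ - Φ σ) ≤ traceNorm (ρ - σ) := by
  have hΔ : (ρ - σ).IsHermitian := hρ.1.1.sub hσ.1.1
  have h : Φ ρ - Φ σ = ∑ k, E k * (ρ - σ) * (E k)ᴴ := by
    rw [hΦ ρ, hΦ σ, ← Finset.sum_sub_distrib]
    exact Finset.sum_congr rfl fun k _ => by rw [Matrix.mul_sub, Matrix.sub_mul]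
  rw [h]
  exact kraus_contraction E hE hΔ
end

section
/- Let Φ be the ℂ-linear endomorphism of D×D complex matrices given by Φ(X) = ∑_k E_k X E_kᴴ for a finite family of D×D complex matrices (E_k) with ∑_k E_kᴴ E_k = I. Then Φ has an invariant state: there exists a positive semidefinite matrix ρ_ss with trace 1 such that Φ(ρ_ss) = ρ_ss. -/
open Matrix ComplexOrder

attribute [local instance] Matrix.normedAddCommGroup Matrix.normedSpace

set_option linter.unusedSectionVars false

namespace CPTPAux

variable {n : Type*} [Fintype n] [DecidableEq n]

lemma posSemidef_add {A B : Matrix n n ℂ} (hA : A.PosSemidef) (hB : B.PosSemidef) :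
    (A + B).PosSemidef := by
  refine ⟨hA.1.add hB.1, fun x => ?_⟩
  have := add_nonneg (hA.2 x) (hB.2 x)
  simpa [mul_add, add_mul] using this

lemma posSemidef_sum {ι : Type*} (s : Finset ι) (f : ι → Matrix n n ℂ)
    (h : ∀ k ∈ s, (f k).PosSemidef) : (∑ k ∈ s, f k).PosSemidef := by
  classical
  induction s using Finset.induction_on with
  | empty => simpa using Matrix.PosSemidef.zero
  | insert _ _ hx ih =>
    rename_i a s
    rw [Finset.sum_insert hx]
    exact posSemidef_add (h a (Finset.mem_insert_self a s))
      (ih fun k hk => h k (Finset.mem_insert_of_mem hk))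

lemma posSemidef_smul {A : Matrix n n ℂ} (hA : A.PosSemidef) {c : ℂ} (hc : 0 ≤ c) :
    (c • A).PosSemidef := by
  have hcs : star c = c := by
    rw [Complex.star_def, Complex.conj_eq_iff_im]
    exact ((Complex.le_def.mp hc).2).symm
  refine ⟨?_, fun x => ?_⟩
  · unfold Matrix.IsHermitian
    rw [Matrix.conjTranspose_smul, hcs, hA.1]
  · have := mul_nonneg hc (hA.2 x)
    simpa [Finsupp.mul_sum, mul_assoc, mul_left_comm c] using this

lemma entry_norm_le_one {ρ : Matrix n n ℂ} (hρ : ρ.PosSemidef) (htr : ρ.trace = 1)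
    (i j : n) : ‖ρ i j‖ ≤ 1 := by
  obtain ⟨B, hB⟩ : ∃ B : Matrix n n ℂ, ρ = Bᴴ * B := by
    open scoped MatrixOrder in
    obtain ⟨B, hB⟩ := CStarAlgebra.nonneg_iff_eq_star_mul_self.mp hρ.nonneg
    exact ⟨B, hB⟩
  set u : n → EuclideanSpace ℂ n := fun l => WithLp.toLp 2 (fun k => B k l) with hu
  have key : ∀ a b : n, ρ a b = inner ℂ (u a) (u b) := by
    intro a b
    rw [hB]
    simp [Matrix.mul_apply, PiLp.inner_apply, u, Matrix.conjTranspose_apply, mul_comm]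
  have hnorm : ∀ l, ‖u l‖ ^ 2 = (ρ l l).re := by
    intro l
    rw [key l l]
    rw [← inner_self_eq_norm_sq (𝕜 := ℂ)]; rfl
  have hdiagsum : ∑ l, ‖u l‖ ^ 2 = 1 := by
    have : (ρ.trace).re = 1 := by rw [htr]; simp
    rw [← this, Matrix.trace]
    simp only [Matrix.diag_apply, Complex.re_sum, hnorm]
  have hle1 : ∀ l, ‖u l‖ ≤ 1 := by
    intro l
    have h1 : ‖u l‖ ^ 2 ≤ 1 := by
      rw [← hdiagsum]
      exact Finset.single_le_sum (f := fun l => ‖u l‖ ^ 2)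
        (fun m _ => sq_nonneg _) (Finset.mem_univ l)
    nlinarith [norm_nonneg (u l)]
  calc ‖ρ i j‖ = ‖(inner ℂ (u i) (u j) : ℂ)‖ := by rw [key]
    _ ≤ ‖u i‖ * ‖u j‖ := norm_inner_le_norm _ _
    _ ≤ 1 * 1 := mul_le_mul (hle1 i) (hle1 j) (norm_nonneg _) zero_le_one
    _ = 1 := one_mul 1

variable {n : Type*} [Fintype n] [DecidableEq n]


lemma isClosed_K : IsClosed {ρ : Matrix n n ℂ | ρ.PosSemidef ∧ ρ.trace = 1} := by
  have h1 : IsClosed {ρ : Matrix n n ℂ | ρ.IsHermitian} := by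
    have : {ρ : Matrix n n ℂ | ρ.IsHermitian} = (fun ρ : Matrix n n ℂ => ρᴴ - ρ) ⁻¹' {0} := by
      ext ρ; simp [Matrix.IsHermitian, sub_eq_zero]
    rw [this]
    exact IsClosed.preimage (continuous_id.matrix_conjTranspose.sub continuous_id)
      isClosed_singleton
  have hcpos : IsClosed {z : ℂ | 0 ≤ z} := by
    have : {z : ℂ | 0 ≤ z} = Complex.re ⁻¹' Set.Ici 0 ∩ Complex.im ⁻¹' {0} := by
      ext z
      simp only [Set.mem_setOf_eq, Complex.le_def, Set.mem_inter_iff, Set.mem_preimage,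
        Set.mem_Ici, Set.mem_singleton_iff, Complex.zero_re, Complex.zero_im]
      tauto
    rw [this]
    exact (isClosed_Ici.preimage Complex.continuous_re).inter
      (isClosed_singleton.preimage Complex.continuous_im)
  have h2 : IsClosed {ρ : Matrix n n ℂ | ∀ x : n → ℂ, 0 ≤ dotProduct (star x) (ρ.mulVec x)} := by
    have : {ρ : Matrix n n ℂ | ∀ x : n → ℂ, 0 ≤ dotProduct (star x) (ρ.mulVec x)} =
        ⋂ x : n → ℂ, (fun ρ : Matrix n n ℂ => dotProduct (star x) (ρ.mulVec x)) ⁻¹' {z | 0 ≤ z} := by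
      ext ρ; simp
    rw [this]
    refine isClosed_iInter fun x => IsClosed.preimage ?_ hcpos
    exact Continuous.dotProduct continuous_const
      (continuous_id.matrix_mulVec continuous_const)
  have h3 : IsClosed {ρ : Matrix n n ℂ | ρ.trace = 1} :=
    isClosed_singleton.preimage (continuous_finset_sum _ fun i _ => continuous_id.matrix_elem i i)
  have : {ρ : Matrix n n ℂ | ρ.PosSemidef ∧ ρ.trace = 1} =
      ({ρ : Matrix n n ℂ | ρ.IsHermitian} ∩
        {ρ | ∀ x : n → ℂ, 0 ≤ dotProduct (star x) (ρ.mulVec x)}) ∩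
      {ρ | ρ.trace = 1} := by
    ext ρ
    simp only [Set.mem_setOf_eq, Set.mem_inter_iff]
    rw [Matrix.posSemidef_iff_dotProduct_mulVec]
  rw [this]
  exact ((h1.inter h2).inter h3)

lemma isCompact_K : IsCompact {ρ : Matrix n n ℂ | ρ.PosSemidef ∧ ρ.trace = 1} := by
  haveI : FiniteDimensional ℝ (Matrix n n ℂ) := Module.Finite.trans ℂ _
  haveI : ProperSpace (Matrix n n ℂ) := FiniteDimensional.proper ℝ _
  refine Metric.isCompact_of_isClosed_isBounded isClosed_K ?_
  refine (Metric.isBounded_closedBall (x := (0 : Matrix n n ℂ)) (r := 1)).subset ?_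
  rintro ρ ⟨h1, h2⟩
  simp only [Metric.mem_closedBall, dist_zero_right]
  exact (Matrix.norm_le_iff zero_le_one).mpr (entry_norm_le_one h1 h2)






set_option maxHeartbeats 1000000 in
theorem main {D : ℕ} {ι : Type*} [Fintype ι]
    (E : ι → Matrix (Fin D) (Fin D) ℂ)
    (hD : 0 < D) (hE : ∑ k, (E k)ᴴ * E k = 1) :
    ∃ ρss : Matrix (Fin D) (Fin D) ℂ,
      ρss.PosSemidef ∧ ρss.trace = 1 ∧ ∑ k, E k * ρss * (E k)ᴴ = ρss := by
  classical
  let Φ : Matrix (Fin D) (Fin D) ℂ →ₗ[ℂ] Matrix (Fin D) (Fin D) ℂ :=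
    { toFun := fun X => ∑ k, E k * X * (E k)ᴴ
      map_add' := fun X Y => by
        simp [Matrix.mul_add, Matrix.add_mul, Finset.sum_add_distrib]
      map_smul' := fun c X => by
        simp [Matrix.mul_smul, Matrix.smul_mul, Finset.smul_sum] }
  set K : Set (Matrix (Fin D) (Fin D) ℂ) := {ρ | ρ.PosSemidef ∧ ρ.trace = 1} with hK
  -- Φ preserves K
  have hΦK : ∀ ρ ∈ K, Φ ρ ∈ K := by
    rintro ρ ⟨hpsd, htr⟩
    constructor
    · exact posSemidef_sum _ _ fun k _ => hpsd.mul_mul_conjTranspose_same (E k)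
    · show Matrix.trace (∑ k, E k * ρ * (E k)ᴴ) = 1
      rw [Matrix.trace_sum]
      have : ∀ k : ι, Matrix.trace (E k * ρ * (E k)ᴴ) = Matrix.trace ((E k)ᴴ * E k * ρ) := by
        intro k
        rw [Matrix.trace_mul_cycle, Matrix.mul_assoc]
      rw [Finset.sum_congr rfl fun k _ => this k]
      rw [← Matrix.trace_sum, ← Finset.sum_mul, hE, Matrix.one_mul, htr]
  -- initial state
  have hρ0 : ((D : ℂ)⁻¹ • (1 : Matrix (Fin D) (Fin D) ℂ)) ∈ K := by
    constructor
    · refine posSemidef_smul Matrix.PosSemidef.one ?_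
      have h0 : ((D:ℂ))⁻¹ = (((D:ℝ)⁻¹ : ℝ) : ℂ) := by rw [Complex.ofReal_inv]; push_cast; ring
      rw [h0, Complex.zero_le_real]
      positivity
    · show Matrix.trace ((D : ℂ)⁻¹ • (1 : Matrix (Fin D) (Fin D) ℂ)) = 1
      rw [Matrix.trace_smul, Matrix.trace_one]
      simp only [smul_eq_mul, Fintype.card_fin]
      exact inv_mul_cancel₀ (by exact_mod_cast hD.ne')
  -- iterates
  let u : ℕ → Matrix (Fin D) (Fin D) ℂ := fun m => Φ^[m] ((D : ℂ)⁻¹ • (1 : Matrix (Fin D) (Fin D) ℂ))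
  have hu : ∀ m, u m ∈ K := by
    intro m
    induction m with
    | zero => exact hρ0
    | succ m ih =>
      have : u (m + 1) = Φ (u m) := by
        simp only [u, Function.iterate_succ_apply']
      rw [this]; exact hΦK _ ih
  -- Cesàro averages
  let a : ℕ → Matrix (Fin D) (Fin D) ℂ := fun m => ((m : ℂ) + 1)⁻¹ • ∑ k ∈ Finset.range (m + 1), u k
  have hcnn : ∀ m : ℕ, (0:ℂ) ≤ ((m : ℂ) + 1)⁻¹ := by
    intro m
    have h0 : ((m:ℂ) + 1)⁻¹ = ((((m:ℝ) + 1)⁻¹ : ℝ) : ℂ) := by rw [Complex.ofReal_inv]; push_cast; ring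
    rw [h0, Complex.zero_le_real]
    positivity
  have ha : ∀ m, a m ∈ K := by
    intro m
    constructor
    · exact posSemidef_smul (posSemidef_sum _ _ fun k _ => (hu k).1) (hcnn m)
    · show Matrix.trace (((m : ℂ) + 1)⁻¹ • ∑ k ∈ Finset.range (m + 1), u k) = 1
      rw [Matrix.trace_smul, Matrix.trace_sum]
      rw [Finset.sum_congr rfl fun k _ => (hu k).2]
      simp only [Finset.sum_const, Finset.card_range, nsmul_eq_mul, smul_eq_mul, mul_one]
      have : ((m:ℂ) + 1) ≠ 0 := by
        intro h
        have := congrArg Complex.re h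
        push_cast at this
        linarith
      field_simp
      push_cast
      ring
  -- compactness & subsequence
  have hKc : IsCompact K := isCompact_K
  haveI : FirstCountableTopology (Matrix (Fin D) (Fin D) ℂ) :=
    inferInstanceAs (FirstCountableTopology (Fin D → Fin D → ℂ))
  obtain ⟨ρ, hρK, φ, hφ, hconv⟩ := hKc.tendsto_subseq ha
  -- continuity of Φ
  have hΦcont : Continuous (Φ : Matrix (Fin D) (Fin D) ℂ → Matrix (Fin D) (Fin D) ℂ) := Φ.continuous_of_finiteDimensional
  -- the defect tends to zero
  have hbound : ∀ m, ‖u m‖ ≤ 1 := by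
    intro m
    have := (hu m)
    exact (Matrix.norm_le_iff zero_le_one).mpr (entry_norm_le_one this.1 this.2)
  have hdefect : ∀ m, Φ (a m) - a m = ((m : ℂ) + 1)⁻¹ • (u (m + 1) - u 0) := by
    intro m
    have h1 : Φ (a m) = ((m : ℂ) + 1)⁻¹ • ∑ k ∈ Finset.range (m + 1), u (k + 1) := by
      rw [show a m = ((m : ℂ) + 1)⁻¹ • ∑ k ∈ Finset.range (m + 1), u k from rfl]
      rw [LinearMap.map_smul, map_sum]
      congr 1
      refine Finset.sum_congr rfl fun k _ => ?_
      simp only [u, Function.iterate_succ_apply']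
    rw [h1, show a m = ((m : ℂ) + 1)⁻¹ • ∑ k ∈ Finset.range (m + 1), u k from rfl,
      ← smul_sub, ← Finset.sum_sub_distrib, Finset.sum_range_sub]
  have hzero : Filter.Tendsto (fun m => Φ (a m) - a m) Filter.atTop (nhds 0) := by
    refine squeeze_zero_norm (a := fun m : ℕ => 2 * (1 / ((m : ℝ) + 1))) (fun m => ?_) ?_
    · rw [hdefect m, norm_smul]
      have h1 : ‖((m : ℂ) + 1)⁻¹‖ = 1 / ((m : ℝ) + 1) := by
        rw [norm_inv, show ((m:ℂ) + 1) = (((m:ℝ) + 1 : ℝ) : ℂ) by push_cast; ring,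
          Complex.norm_real, Real.norm_eq_abs, abs_of_pos (by positivity), one_div]
      rw [h1]
      rw [mul_comm]
      refine mul_le_mul_of_nonneg_right ?_ (by positivity)
      calc ‖u (m + 1) - u 0‖ ≤ ‖u (m + 1)‖ + ‖u 0‖ := norm_sub_le _ _
        _ ≤ 1 + 1 := add_le_add (hbound _) (hbound _)
        _ = 2 := by norm_num
    · have := (tendsto_one_div_add_atTop_nhds_zero_nat (𝕜 := ℝ)).const_mul 2
      simpa using this
  -- conclude
  have h2 : Filter.Tendsto (fun m => Φ (a (φ m)) - a (φ m)) Filter.atTop (nhds (Φ ρ - ρ)) :=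
    ((hΦcont.tendsto ρ).comp hconv).sub hconv
  have h3 : Filter.Tendsto (fun m => Φ (a (φ m)) - a (φ m)) Filter.atTop (nhds 0) :=
    hzero.comp hφ.tendsto_atTop
  have hfix : Φ ρ - ρ = 0 := tendsto_nhds_unique h2 h3
  exact ⟨ρ, hρK.1, hρK.2, by rw [← sub_eq_zero]; exact hfix⟩

end CPTPAux

/-- Every CPTP map (in Kraus form) has an invariant state: a positive
semidefinite trace-one fixed point. -/
theorem cptp_exists_invariant_state {D : ℕ} {ι : Type*} [Fintype ι]
    (E : ι → Matrix (Fin D) (Fin D) ℂ)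
    (hD : 0 < D) (hE : ∑ k, (E k)ᴴ * E k = 1) :
    ∃ ρss : Matrix (Fin D) (Fin D) ℂ,
      ρss.PosSemidef ∧ ρss.trace = 1 ∧ ∑ k, E k * ρss * (E k)ᴴ = ρss :=
  CPTPAux.main E hD hE
end

section
/- (Cross term of the quantum switch of two depolarizing channels.) Let D ≥ 1, 0 < q₁, q₂ ≤ 1, and let (U_i)_{i ∈ Fin D²} and (V_j)_{j ∈ Fin D²} be families of unitary D×D complex matrices with tr(U_iᴴU_j) = D·δ_{ij} and tr(V_iᴴV_j) = D·δ_{ij}. Define U₀ = (D√(1−q₁)/√q₁) • I and V₀ = (D√(1−q₂)/√q₂) • I. Then for every D×D complex matrix ρ: (q₁q₂/D⁴) · ∑_{i=0}^{D²} ∑_{j=0}^{D²} U_i V_j ρ U_iᴴ V_jᴴ = (q₁q₂/D²) • ρ + q₁(1−q₂)·tr(ρ) • (I/D) + q₂(1−q₁)·tr(ρ) • (I/D) + (1−q₁)(1−q₂) • ρ. -/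
open Matrix

lemma recon {D : ℕ} (hD : 1 ≤ D) (W : Fin (D ^ 2) → Matrix (Fin D) (Fin D) ℂ)
    (horth : ∀ i j, ((W i)ᴴ * W j).trace = if i = j then (D : ℂ) else 0)
    (M : Matrix (Fin D) (Fin D) ℂ) :
    ∑ i, ((W i)ᴴ * M).trace • W i = (D : ℂ) • M := by
  have hDne : (D : ℂ) ≠ 0 := Nat.cast_ne_zero.2 (by omega)
  have li : LinearIndependent ℂ W := by
    rw [Fintype.linearIndependent_iff]
    intro g hg j
    have h := congrArg (fun N => ((W j)ᴴ * N).trace) hg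
    simp only [Finset.mul_sum, Matrix.mul_smul, trace_sum, trace_smul, smul_eq_mul,
      horth, Matrix.mul_zero, trace_zero] at h
    simp only [mul_ite, mul_zero] at h
    rw [Finset.sum_ite_eq Finset.univ j (fun i => g i * (D:ℂ))] at h
    simp at h
    rcases h with h | h
    · exact h
    · omega
  have hcard : Fintype.card (Fin (D ^ 2)) = Module.finrank ℂ (Matrix (Fin D) (Fin D) ℂ) := by
    simp [Module.finrank_matrix, pow_two]
  have : Nonempty (Fin (D ^ 2)) := ⟨⟨0, by positivity⟩⟩
  let b := basisOfLinearIndependentOfCardEqFinrank li hcard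
  have hb : ∀ i, b i = W i := fun i => by
    simp [b, coe_basisOfLinearIndependentOfCardEqFinrank]
  let T : Matrix (Fin D) (Fin D) ℂ →ₗ[ℂ] Matrix (Fin D) (Fin D) ℂ :=
    { toFun := fun N => ∑ i, ((W i)ᴴ * N).trace • W i
      map_add' := fun N₁ N₂ => by
        simp [Matrix.mul_add, add_smul, Finset.sum_add_distrib]
      map_smul' := fun c N => by
        simp [Matrix.mul_smul, trace_smul, smul_smul, Finset.smul_sum] }
  have hT : T = (D : ℂ) • (LinearMap.id : Matrix (Fin D) (Fin D) ℂ →ₗ[ℂ] _) := by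
    apply b.ext
    intro j
    simp only [T, LinearMap.coe_mk, AddHom.coe_mk, LinearMap.smul_apply, LinearMap.id_apply, hb]
    simp only [horth]
    rw [Finset.sum_congr rfl (fun i _ => by rw [ite_smul, zero_smul])]
    rw [Finset.sum_ite_eq' Finset.univ j (fun i => (D:ℂ) • W i)]
    simp
  have := congrArg (fun f => f M) hT
  simpa [T] using this

lemma complete {D : ℕ} (hD : 1 ≤ D) (W : Fin (D ^ 2) → Matrix (Fin D) (Fin D) ℂ)
    (horth : ∀ i j, ((W i)ᴴ * W j).trace = if i = j then (D : ℂ) else 0)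
    (p q r s : Fin D) :
    ∑ i, (starRingEnd ℂ) (W i p q) * W i r s =
      if p = r ∧ q = s then (D : ℂ) else 0 := by
  have h := recon hD W horth (Matrix.single p q 1)
  have htr : ∀ i, ((W i)ᴴ * Matrix.single p q 1).trace = (starRingEnd ℂ) (W i p q) := by
    intro i
    simp [Matrix.trace, Matrix.mul_apply, Matrix.diag, Matrix.single, conjTranspose_apply,
      Finset.sum_ite_eq, ite_and]
  simp only [htr] at h
  have h2 := congrFun (congrFun h r) s
  simp only [Matrix.sum_apply, Matrix.smul_apply, smul_eq_mul, Matrix.single] at h2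
  rw [h2]
  simp [Matrix.of_apply, and_comm, eq_comm]

lemma twirl {D : ℕ} (hD : 1 ≤ D) (W : Fin (D ^ 2) → Matrix (Fin D) (Fin D) ℂ)
    (horth : ∀ i j, ((W i)ᴴ * W j).trace = if i = j then (D : ℂ) else 0)
    (M : Matrix (Fin D) (Fin D) ℂ) :
    ∑ i, W i * M * (W i)ᴴ = ((D : ℂ) * M.trace) • 1 := by
  ext a b
  simp only [Matrix.sum_apply, Matrix.mul_apply, conjTranspose_apply, Matrix.smul_apply,
    Matrix.one_apply, smul_eq_mul]
  rw [Finset.sum_comm]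
  have key : ∀ c, ∑ i, (∑ d, W i a d * M d c) * star (W i b c)
      = ∑ d, M d c * (if b = a ∧ c = d then (D:ℂ) else 0) := by
    intro c
    simp only [Finset.sum_mul]
    rw [Finset.sum_comm]
    refine Finset.sum_congr rfl fun d _ => ?_
    rw [← complete hD W horth b c a d, Finset.mul_sum]
    refine Finset.sum_congr rfl fun i _ => ?_
    simp only [starRingEnd_apply]
    ring
  rw [Finset.sum_congr rfl fun c _ => key c]
  by_cases hab : b = a
  · subst hab
    simp [Matrix.trace, Matrix.diag, Finset.mul_sum, mul_comm, eq_comm]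
  · simp [hab, Ne.symm hab]

lemma dualrecon {D : ℕ} (hD : 1 ≤ D) (W : Fin (D ^ 2) → Matrix (Fin D) (Fin D) ℂ)
    (horth : ∀ i j, ((W i)ᴴ * W j).trace = if i = j then (D : ℂ) else 0)
    (ρ : Matrix (Fin D) (Fin D) ℂ) :
    ∑ j, (W j * ρ).trace • (W j)ᴴ = (D : ℂ) • ρ := by
  have h := congrArg conjTranspose (recon hD W horth ρᴴ)
  simp only [conjTranspose_sum, conjTranspose_smul, conjTranspose_conjTranspose] at h
  calc ∑ j, (W j * ρ).trace • (W j)ᴴ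
      = ∑ x, star ((W x)ᴴ * ρᴴ).trace • (W x)ᴴ := Finset.sum_congr rfl fun j _ => by
        congr 1
        rw [← trace_conjTranspose, conjTranspose_mul, conjTranspose_conjTranspose,
          trace_mul_comm]
        simp
    _ = star (D : ℂ) • ρ := h
    _ = (D : ℂ) • ρ := by simp

/-- Cross (coherence) term of the quantum switch of two depolarizing channels. -/
theorem depolarizing_switch_cross_term {D : ℕ} (hD : 1 ≤ D)
    (q₁ q₂ : ℝ) (hq₁0 : 0 < q₁) (hq₁1 : q₁ ≤ 1) (hq₂0 : 0 < q₂) (hq₂1 : q₂ ≤ 1)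
    (U V : Fin (D ^ 2) → Matrix (Fin D) (Fin D) ℂ)
    (hUunit : ∀ i, (U i)ᴴ * U i = 1) (hVunit : ∀ j, (V j)ᴴ * V j = 1)
    (hUorth : ∀ i j, ((U i)ᴴ * U j).trace = if i = j then (D : ℂ) else 0)
    (hVorth : ∀ i j, ((V i)ᴴ * V j).trace = if i = j then (D : ℂ) else 0)
    (eU eV : Option (Fin (D ^ 2)) → Matrix (Fin D) (Fin D) ℂ)
    (heU0 : eU none = (((D : ℝ) * Real.sqrt (1 - q₁) / Real.sqrt q₁ : ℝ) : ℂ) •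
      (1 : Matrix (Fin D) (Fin D) ℂ))
    (heU : ∀ i, eU (some i) = U i)
    (heV0 : eV none = (((D : ℝ) * Real.sqrt (1 - q₂) / Real.sqrt q₂ : ℝ) : ℂ) •
      (1 : Matrix (Fin D) (Fin D) ℂ))
    (heV : ∀ j, eV (some j) = V j)
    (ρ : Matrix (Fin D) (Fin D) ℂ) :
    ((q₁ * q₂ / (D : ℝ) ^ 4 : ℝ) : ℂ) •
        ∑ i : Option (Fin (D ^ 2)), ∑ j : Option (Fin (D ^ 2)),
          eU i * eV j * ρ * (eU i)ᴴ * (eV j)ᴴ =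
      ((q₁ * q₂ / (D : ℝ) ^ 2 : ℝ) : ℂ) • ρ +
        (((q₁ * (1 - q₂) : ℝ) : ℂ) * ρ.trace / (D : ℂ)) •
          (1 : Matrix (Fin D) (Fin D) ℂ) +
        (((q₂ * (1 - q₁) : ℝ) : ℂ) * ρ.trace / (D : ℂ)) •
          (1 : Matrix (Fin D) (Fin D) ℂ) +
        (((1 - q₁) * (1 - q₂) : ℝ) : ℂ) • ρ := by
  have hD0 : (0:ℝ) < D := by exact_mod_cast hD
  have hDne : (D:ℝ) ≠ 0 := ne_of_gt hD0
  set r₁ : ℝ := (D : ℝ) * Real.sqrt (1 - q₁) / Real.sqrt q₁ with hr₁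
  set r₂ : ℝ := (D : ℝ) * Real.sqrt (1 - q₂) / Real.sqrt q₂ with hr₂
  have h1q₁ : (0:ℝ) ≤ 1 - q₁ := by linarith
  have h1q₂ : (0:ℝ) ≤ 1 - q₂ := by linarith
  have hr₁sq : r₁ * r₁ = (D:ℝ)^2 * (1 - q₁) / q₁ := by
    rw [hr₁, div_mul_div_comm, Real.mul_self_sqrt hq₁0.le]
    rw [mul_mul_mul_comm, Real.mul_self_sqrt h1q₁]
    ring
  have hr₂sq : r₂ * r₂ = (D:ℝ)^2 * (1 - q₂) / q₂ := by
    rw [hr₂, div_mul_div_comm, Real.mul_self_sqrt hq₂0.le]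
    rw [mul_mul_mul_comm, Real.mul_self_sqrt h1q₂]
    ring
  -- complex scalars
  set s : ℂ := ((q₁ * q₂ / (D : ℝ) ^ 4 : ℝ) : ℂ) with hs
  set c₁ : ℂ := ((r₁ : ℝ) : ℂ) with hc₁
  set c₂ : ℂ := ((r₂ : ℝ) : ℂ) with hc₂
  -- split the double sum
  have hsplit : (∑ i : Option (Fin (D^2)), ∑ j : Option (Fin (D^2)),
        eU i * eV j * ρ * (eU i)ᴴ * (eV j)ᴴ)
      = (eU none * eV none * ρ * (eU none)ᴴ * (eV none)ᴴ)
        + (∑ j, eU none * eV (some j) * ρ * (eU none)ᴴ * (eV (some j))ᴴ)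
        + ((∑ i, eU (some i) * eV none * ρ * (eU (some i))ᴴ * (eV none)ᴴ)
        + ∑ i, ∑ j, eU (some i) * eV (some j) * ρ * (eU (some i))ᴴ * (eV (some j))ᴴ) := by
    rw [Fintype.sum_option]
    simp only [Fintype.sum_option, Finset.sum_add_distrib]
  have hstar₁ : (c₁ • (1 : Matrix (Fin D) (Fin D) ℂ))ᴴ = c₁ • 1 := by
    rw [conjTranspose_smul, conjTranspose_one, hc₁, Complex.star_def, Complex.conj_ofReal]
  have hstar₂ : (c₂ • (1 : Matrix (Fin D) (Fin D) ℂ))ᴴ = c₂ • 1 := by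
    rw [conjTranspose_smul, conjTranspose_one, hc₂, Complex.star_def, Complex.conj_ofReal]
  -- the four pieces
  have hnn : eU none * eV none * ρ * (eU none)ᴴ * (eV none)ᴴ
      = (c₁ * c₂ * (c₁ * c₂)) • ρ := by
    rw [heU0, heV0, hstar₁, hstar₂]
    simp only [Matrix.smul_mul, Matrix.mul_smul, Matrix.one_mul, Matrix.mul_one, smul_smul]
    module
  have hnj : (∑ j, eU none * eV (some j) * ρ * (eU none)ᴴ * (eV (some j))ᴴ)
      = (c₁ * c₁ * ((D:ℂ) * ρ.trace)) • (1 : Matrix (Fin D) (Fin D) ℂ) := by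
    have key : ∀ j, eU none * eV (some j) * ρ * (eU none)ᴴ * (eV (some j))ᴴ
        = (c₁ * c₁) • (V j * ρ * (V j)ᴴ) := by
      intro j
      rw [heU0, heV j, hstar₁]
      simp only [Matrix.smul_mul, Matrix.mul_smul, Matrix.one_mul, Matrix.mul_one, smul_smul]
    rw [Finset.sum_congr rfl fun j _ => key j, ← Finset.smul_sum,
      twirl hD V hVorth ρ, smul_smul]
  have hin : (∑ i, eU (some i) * eV none * ρ * (eU (some i))ᴴ * (eV none)ᴴ)
      = (c₂ * c₂ * ((D:ℂ) * ρ.trace)) • (1 : Matrix (Fin D) (Fin D) ℂ) := by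
    have key : ∀ i, eU (some i) * eV none * ρ * (eU (some i))ᴴ * (eV none)ᴴ
        = (c₂ * c₂) • (U i * ρ * (U i)ᴴ) := by
      intro i
      rw [heV0, heU i, hstar₂]
      simp only [Matrix.smul_mul, Matrix.mul_smul, Matrix.one_mul, Matrix.mul_one, smul_smul]
    rw [Finset.sum_congr rfl fun i _ => key i, ← Finset.smul_sum,
      twirl hD U hUorth ρ, smul_smul]
  have hij : (∑ i, ∑ j, eU (some i) * eV (some j) * ρ * (eU (some i))ᴴ * (eV (some j))ᴴ)
      = ((D:ℂ) * (D:ℂ)) • ρ := by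
    calc (∑ i, ∑ j, eU (some i) * eV (some j) * ρ * (eU (some i))ᴴ * (eV (some j))ᴴ)
        = ∑ j, (∑ i, U i * (V j * ρ) * (U i)ᴴ) * (V j)ᴴ := by
          rw [Finset.sum_comm]
          refine Finset.sum_congr rfl fun j _ => ?_
          rw [Finset.sum_mul]
          refine Finset.sum_congr rfl fun i _ => ?_
          rw [heU i, heV j]
          noncomm_ring
      _ = ∑ j, (D:ℂ) • ((V j * ρ).trace • (V j)ᴴ) := by
          refine Finset.sum_congr rfl fun j _ => ?_
          rw [twirl hD U hUorth, Matrix.smul_mul, Matrix.one_mul, mul_smul]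
      _ = (D:ℂ) • ∑ j, (V j * ρ).trace • (V j)ᴴ := by rw [Finset.smul_sum]
      _ = ((D:ℂ) * (D:ℂ)) • ρ := by rw [dualrecon hD V hVorth ρ, smul_smul]
  -- nonzero casts
  have hDc : ((D:ℕ):ℂ) ≠ 0 := by exact_mod_cast hDne
  have hq₁c : ((q₁:ℝ):ℂ) ≠ 0 := by exact_mod_cast hq₁0.ne'
  have hq₂c : ((q₂:ℝ):ℂ) ≠ 0 := by exact_mod_cast hq₂0.ne'
  have hcr₁ : c₁ * c₁ = (((D:ℝ)^2 * (1 - q₁) / q₁ : ℝ) : ℂ) := by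
    rw [hc₁, ← Complex.ofReal_mul, hr₁sq]
  have hcr₂ : c₂ * c₂ = (((D:ℝ)^2 * (1 - q₂) / q₂ : ℝ) : ℂ) := by
    rw [hc₂, ← Complex.ofReal_mul, hr₂sq]
  -- scalar identities
  have e1 : s * (c₁ * c₂ * (c₁ * c₂)) = (((1 - q₁) * (1 - q₂) : ℝ) : ℂ) := by
    rw [hs, show c₁ * c₂ * (c₁ * c₂) = (c₁ * c₁) * (c₂ * c₂) by ring, hcr₁, hcr₂]
    push_cast
    field_simp
  have e2 : s * (c₁ * c₁ * ((D:ℂ) * ρ.trace))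
      = ((q₂ * (1 - q₁) : ℝ) : ℂ) * ρ.trace / (D : ℂ) := by
    rw [hs, hcr₁]
    push_cast
    field_simp
  have e3 : s * (c₂ * c₂ * ((D:ℂ) * ρ.trace))
      = ((q₁ * (1 - q₂) : ℝ) : ℂ) * ρ.trace / (D : ℂ) := by
    rw [hs, hcr₂]
    push_cast
    field_simp
  have e4 : s * ((D:ℂ) * (D:ℂ)) = ((q₁ * q₂ / (D : ℝ) ^ 2 : ℝ) : ℂ) := by
    rw [hs]
    push_cast
    field_simp
  rw [hsplit, hnn, hnj, hin, hij]
  simp only [smul_add, smul_smul]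
  -- now scalar identities
  have e1 : s * (c₁ * c₂ * (c₁ * c₂)) = (((1 - q₁) * (1 - q₂) : ℝ) : ℂ) := by
    rw [hs, hc₁, hc₂]
    push_cast
    rw [show ((r₁:ℂ) * r₂ * (r₁ * r₂)) = ((r₁*r₁ : ℝ):ℂ) * ((r₂*r₂ : ℝ):ℂ) by push_cast; ring]
    rw [hr₁sq, hr₂sq]
    push_cast
    field_simp
  have e2 : s * (c₁ * c₁ * ((D:ℂ) * ρ.trace))
      = ((q₂ * (1 - q₁) : ℝ) : ℂ) * ρ.trace / (D : ℂ) := by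
    rw [hs, hc₁]
    rw [show ((r₁:ℂ) * r₁) = ((r₁*r₁ : ℝ):ℂ) by push_cast; ring]
    rw [hr₁sq]
    push_cast
    have : (D:ℂ) ≠ 0 := by exact_mod_cast hDne
    field_simp
  have e3 : s * (c₂ * c₂ * ((D:ℂ) * ρ.trace))
      = ((q₁ * (1 - q₂) : ℝ) : ℂ) * ρ.trace / (D : ℂ) := by
    rw [hs, hc₂]
    rw [show ((r₂:ℂ) * r₂) = ((r₂*r₂ : ℝ):ℂ) by push_cast; ring]
    rw [hr₂sq]
    push_cast
    have : (D:ℂ) ≠ 0 := by exact_mod_cast hDne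
    field_simp
  have e4 : s * ((D:ℂ) * (D:ℂ)) = ((q₁ * q₂ / (D : ℝ) ^ 2 : ℝ) : ℂ) := by
    rw [hs]
    push_cast
    field_simp
  rw [e1, e2, e3, e4]
  abel
end
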